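/- Every Goodstein walk over the elementary notation system is finite: if (m_i) is a sequence such that for each i with m_i > 0 there exists a term τ_i built from 0, +, ·, and base-(i+2) exponentiation with value m_i, and m_{i+1} equals the value of τ_i with each i+2 replaced by i+3, minus 1, then some m_i = 0. -/

import Mathlib

/-- Terms of the elementary notation system `L_k`: generated by `0`,
addition, multiplication, and base-`k` exponentiation `x ↦ k^x`. -/
inductive LTerm : Type
  | zero : LTerm
  | add : LTerm → LTerm → LTerm
  | mul : LTerm → LTerm → LTerm
  | expBase : LTerm → LTerm

/-- Value of an elementary term at base `k`. -/
def LTerm.val (k : ℕ) : LTerm → ℕ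
  | .zero => 0
  | .add s t => s.val k + t.val k
  | .mul s t => s.val k * t.val k
  | .expBase s => k ^ s.val k

namespace GW

lemma pow_log_pos (k n : ℕ) : 0 < k ^ Nat.log k n := by
  rcases Nat.eq_zero_or_pos k with h | h
  · subst h; simp [Nat.log_zero_left]
  · exact pow_pos h _

lemma mod_pow_log_lt {k n : ℕ} (hn : n ≠ 0) : n % k ^ Nat.log k n < n :=
  lt_of_lt_of_le (Nat.mod_lt _ (pow_log_pos k n)) (Nat.pow_log_le_self k hn)

def bch (k n : ℕ) : ℕ :=
  if hn : n = 0 then 0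
  else (k+1) ^ bch k (Nat.log k n) * (n / k ^ Nat.log k n) + bch k (n % k ^ Nat.log k n)
decreasing_by
  · exact Nat.log_lt_self k hn
  · exact mod_pow_log_lt hn

lemma bch_zero (k : ℕ) : bch k 0 = 0 := by rw [bch]; rfl

lemma bch_eq {k n : ℕ} (hn : n ≠ 0) :
    bch k n = (k+1) ^ bch k (Nat.log k n) * (n / k ^ Nat.log k n)
      + bch k (n % k ^ Nat.log k n) := by
  rw [bch]; simp [hn]

lemma decomp {K E d r : ℕ} (hK : 2 ≤ K) (hd1 : 1 ≤ d) (hdK : d < K) (hr : r < K^E) :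
    Nat.log K (K^E*d + r) = E ∧ (K^E*d + r) / K^E = d ∧ (K^E*d + r) % K^E = r := by
  have hKE : 0 < K^E := pow_pos (by omega) _
  have h1 : K^E ≤ K^E*d + r := le_add_right (Nat.le_mul_of_pos_right _ hd1)
  have h2 : K^E*d + r < K^(E+1) := by
    have : K^E*d + r < K^E*(d+1) := by nlinarith
    calc K^E*d + r < K^E*(d+1) := this
    _ ≤ K^E*K := Nat.mul_le_mul_left _ (by omega)
    _ = K^(E+1) := (pow_succ K E).symm
  refine ⟨Nat.log_eq_of_pow_le_of_lt_pow h1 h2, ?_, ?_⟩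
  · rw [show K^E*d + r = r + d * K^E by ring, Nat.add_mul_div_right _ _ hKE,
      Nat.div_eq_of_lt hr]; omega
  · rw [Nat.mul_add_mod, Nat.mod_eq_of_lt hr]

lemma self_decomp {k n : ℕ} (hk : 2 ≤ k) (hn : n ≠ 0) :
    n = k ^ Nat.log k n * (n / k ^ Nat.log k n) + n % k ^ Nat.log k n ∧
    1 ≤ n / k ^ Nat.log k n ∧ n / k ^ Nat.log k n < k ∧
    n % k ^ Nat.log k n < k ^ Nat.log k n := by
  have hKE : 0 < k ^ Nat.log k n := pow_pos (by omega) _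
  refine ⟨(Nat.div_add_mod n _).symm, ?_, ?_, Nat.mod_lt _ hKE⟩
  · exact Nat.one_le_div_iff hKE |>.2 (Nat.pow_log_le_self k hn)
  · rw [Nat.div_lt_iff_lt_mul hKE, ← pow_succ']
    exact Nat.lt_pow_succ_log_self (by omega) n

lemma bch_key {k : ℕ} (hk : 2 ≤ k) : ∀ N : ℕ,
    (∀ a, a < N → bch k a < bch k N) ∧
    (∀ n, n < k^N → bch k n < (k+1)^(bch k N)) := by
  intro N
  induction N using Nat.strong_induction_on with
  | _ N IH =>
  have mono : ∀ a, a < N → bch k a < bch k N := by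
    intro a haN
    have hN : N ≠ 0 := by omega
    obtain ⟨hNrep, hNd1, hNdk, hNr⟩ := self_decomp hk hN
    have hBN : bch k N = (k+1)^(bch k (Nat.log k N)) * (N / k ^ Nat.log k N)
        + bch k (N % k ^ Nat.log k N) := bch_eq hN
    have heNN : Nat.log k N < N := Nat.log_lt_self k hN
    have boundeN : ∀ n', n' < k ^ Nat.log k N →
        bch k n' < (k+1)^(bch k (Nat.log k N)) := (IH _ heNN).2
    by_cases ha : a = 0
    · subst ha; rw [bch_zero]
      have h1 : 0 < (k+1)^(bch k (Nat.log k N)) * (N / k ^ Nat.log k N) := by positivity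
      omega
    · obtain ⟨harep, had1, hadk, har⟩ := self_decomp hk ha
      have hBa : bch k a = (k+1)^(bch k (Nat.log k a)) * (a / k ^ Nat.log k a)
          + bch k (a % k ^ Nat.log k a) := bch_eq ha
      have hle : Nat.log k a ≤ Nat.log k N := Nat.log_mono_right (le_of_lt haN)
      rcases lt_or_eq_of_le hle with hlt | heq
      · have ha' : a < k ^ Nat.log k N := by
          have h1 : a < k ^ (Nat.log k a + 1) := Nat.lt_pow_succ_log_self (by omega) a
          exact lt_of_lt_of_le h1 (Nat.pow_le_pow_right (by omega) (by omega))
        calc bch k a < (k+1)^(bch k (Nat.log k N)) := boundeN a ha'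
        _ ≤ (k+1)^(bch k (Nat.log k N)) * (N / k ^ Nat.log k N) :=
            Nat.le_mul_of_pos_right _ hNd1
        _ ≤ bch k N := by omega
      · rw [heq] at hBa harep har
        have hra' : bch k (a % k ^ Nat.log k N) < (k+1)^(bch k (Nat.log k N)) :=
          boundeN _ har
        have hda : a / k ^ Nat.log k N ≤ N / k ^ Nat.log k N := by
          rw [← heq]; rw [← heq] at harep har hra' hBa
          exact Nat.div_le_div_right (le_of_lt haN)
        rcases lt_or_eq_of_le hda with hdlt | hdeq
        · calc bch k a < (k+1)^(bch k (Nat.log k N)) * (a / k ^ Nat.log k N)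
              + (k+1)^(bch k (Nat.log k N)) := by omega
          _ = (k+1)^(bch k (Nat.log k N)) * (a / k ^ Nat.log k N + 1) := by ring
          _ ≤ (k+1)^(bch k (Nat.log k N)) * (N / k ^ Nat.log k N) :=
              Nat.mul_le_mul_left _ (by omega)
          _ ≤ bch k N := by omega
        · have hralt : a % k ^ Nat.log k N < N % k ^ Nat.log k N := by
            rw [hdeq] at harep; omega
          have hrNlt : N % k ^ Nat.log k N < N := mod_pow_log_lt hN
          have := (IH _ hrNlt).1 _ hralt
          rw [hdeq] at hBa
          omega
  refine ⟨mono, ?_⟩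
  intro n hn
  by_cases hn0 : n = 0
  · subst hn0; rw [bch_zero]; positivity
  · obtain ⟨hrep, hd1, hdk, hr⟩ := self_decomp hk hn0
    have he'N : Nat.log k n < N := by
      have h1 : k ^ Nat.log k n ≤ n := Nat.pow_log_le_self k hn0
      exact (Nat.pow_lt_pow_iff_right (by omega : 1 < k)).1 (lt_of_le_of_lt h1 hn)
    have hBr : bch k (n % k ^ Nat.log k n) < (k+1)^(bch k (Nat.log k n)) :=
      (IH _ he'N).2 _ hr
    have hBe : bch k (Nat.log k n) < bch k N := mono _ he'N
    have hBn := bch_eq (k := k) hn0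
    calc bch k n < (k+1)^(bch k (Nat.log k n)) * (n / k ^ Nat.log k n)
        + (k+1)^(bch k (Nat.log k n)) := by omega
    _ = (k+1)^(bch k (Nat.log k n)) * (n / k ^ Nat.log k n + 1) := by ring
    _ ≤ (k+1)^(bch k (Nat.log k n)) * (k+1) := Nat.mul_le_mul_left _ (by omega)
    _ = (k+1)^(bch k (Nat.log k n) + 1) := (pow_succ _ _).symm
    _ ≤ (k+1)^(bch k N) := Nat.pow_le_pow_right (by omega) (by omega)

lemma bch_lt_bch {k : ℕ} (hk : 2 ≤ k) {a b : ℕ} (h : a < b) : bch k a < bch k b :=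
  (bch_key hk b).1 a h

lemma bch_le_bch {k : ℕ} (hk : 2 ≤ k) {a b : ℕ} (h : a ≤ b) : bch k a ≤ bch k b := by
  rcases lt_or_eq_of_le h with h | h
  · exact le_of_lt (bch_lt_bch hk h)
  · rw [h]

lemma bch_pos {k : ℕ} (hk : 2 ≤ k) {n : ℕ} (hn : n ≠ 0) : 0 < bch k n := by
  have := bch_lt_bch hk (Nat.pos_of_ne_zero hn)
  rwa [bch_zero] at this

lemma bch_bound {k : ℕ} (hk : 2 ≤ k) {n e : ℕ} (h : n < k^e) :
    bch k n < (k+1)^(bch k e) := (bch_key hk e).2 n h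

lemma bch_L {k : ℕ} (hk : 2 ≤ k) : ∀ r e d, d < k →
    (k+1)^(bch k e) * d + bch k r ≤ bch k (k^e * d + r) := by
  intro r
  induction r using Nat.strong_induction_on with
  | _ r IHr =>
  intro e d hd
  by_cases hd0 : d = 0
  · subst hd0; simp
  · have hd1 : 1 ≤ d := Nat.pos_of_ne_zero hd0
    have hke : 0 < k^e := pow_pos (by omega) _
    by_cases hr : r < k^e
    · obtain ⟨hlog, hdiv, hmod⟩ := decomp hk hd1 hd hr
      have hn0 : k^e*d + r ≠ 0 := by
        have : 0 < k^e*d := Nat.mul_pos hke hd1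
        omega
      rw [bch_eq hn0, hlog, hdiv, hmod]
    · push_neg at hr
      have hr0 : r ≠ 0 := by omega
      obtain ⟨hrrep, hc1, hck, hs⟩ := self_decomp hk hr0
      have hBr : bch k r = (k+1)^(bch k (Nat.log k r)) * (r / k ^ Nat.log k r)
          + bch k (r % k ^ Nat.log k r) := bch_eq hr0
      have hef : e ≤ Nat.log k r := (Nat.le_log_iff_pow_le (by omega) hr0).2 hr
      have hkf : 0 < k ^ Nat.log k r := pow_pos (by omega) _
      have hfr : k ^ Nat.log k r ≤ r := Nat.pow_log_le_self k hr0
      rcases lt_or_eq_of_le hef with hlt | heqf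
      · -- e < log k r
        have hed : k^e*d < k ^ Nat.log k r := by
          calc k^e*d < k^e*k := (Nat.mul_lt_mul_left hke).2 hd
          _ = k^(e+1) := (pow_succ k e).symm
          _ ≤ k ^ Nat.log k r := Nat.pow_le_pow_right (by omega) (by omega)
        have h1 : k^e*d + r % k ^ Nat.log k r < r := by
          have h2 : k ^ Nat.log k r ≤ k ^ Nat.log k r * (r / k ^ Nat.log k r) :=
            Nat.le_mul_of_pos_right _ hc1
          omega
        have h3 : r % k ^ Nat.log k r < r := by omega
        have step1 := IHr _ h1 (Nat.log k r) (r / k ^ Nat.log k r) hck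
        have step2 := IHr _ h3 e d hd
        have hn : k^e*d + r
            = k ^ Nat.log k r * (r / k ^ Nat.log k r) + (k^e*d + r % k ^ Nat.log k r) := by
          omega
        rw [hn]
        omega
      · -- e = log k r
        rw [← heqf] at hrrep hc1 hck hs hBr hfr
        by_cases hdc : d + r / k^e < k
        · have hs' : r % k^e < k^e := hs
          obtain ⟨hlog, hdiv, hmod⟩ := decomp hk (by omega) hdc hs'
          have hn : k^e*d + r = k^e*(d + r / k^e) + r % k^e := by
            rw [show k^e*(d + r / k^e) = k^e*d + k^e*(r / k^e) from Nat.mul_add _ _ _]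
            omega
          have hn0 : k^e*(d + r / k^e) + r % k^e ≠ 0 := by
            have : 0 < k^e*(d + r / k^e) := Nat.mul_pos hke (by omega)
            omega
          rw [hn, bch_eq hn0, hlog, hdiv, hmod]
          have hPdc : (k+1)^(bch k e)*(d + r / k^e)
              = (k+1)^(bch k e)*d + (k+1)^(bch k e)*(r / k^e) := Nat.mul_add _ _ _
          omega
        · push_neg at hdc
          set c' := d + r / k^e - k with hc'
          have hc'k : c' < k := by omega
          have hc'c : c' < r / k^e := by omega
          have hmul : k^e*c' < k^e*(r / k^e) := (Nat.mul_lt_mul_left hke).2 hc'c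
          have h1 : k^e*c' + r % k^e < r := by omega
          have h3 : r % k^e < r := by omega
          have step1 := IHr _ h1 (e+1) 1 (by omega)
          have step2 := IHr _ h3 e c' hc'k
          simp only [mul_one] at step1
          have hd' : d + r / k^e = k + c' := by omega
          have hsplit : k^e*d + k^e*(r / k^e) = k^e*k + k^e*c' := by
            rw [← Nat.mul_add, ← Nat.mul_add, hd']
          have hn : k^e*d + r = k^(e+1) + (k^e*c' + r % k^e) := by
            rw [pow_succ]; omega
          have hpow : (k+1)^(bch k e) * (k+1) ≤ (k+1)^(bch k (e+1)) := by
            rw [← pow_succ]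
            exact Nat.pow_le_pow_right (by omega) (bch_lt_bch hk (by omega))
          have hPk : (k+1)^(bch k e)*(k+1) = (k+1)^(bch k e)*k + (k+1)^(bch k e) := by
            ring
          have hPsplit : (k+1)^(bch k e)*d + (k+1)^(bch k e)*(r / k^e)
              = (k+1)^(bch k e)*k + (k+1)^(bch k e)*c' := by
            rw [← Nat.mul_add, ← Nat.mul_add, hd']
          rw [hn]
          omega

lemma bch_superadd {k : ℕ} (hk : 2 ≤ k) : ∀ a b, bch k a + bch k b ≤ bch k (a + b) := by
  intro a
  induction a using Nat.strong_induction_on with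
  | _ a IH =>
  intro b
  by_cases ha : a = 0
  · subst ha; simp [bch_zero]
  · obtain ⟨harep, hd1, hdk, hr⟩ := self_decomp hk ha
    have hBa : bch k a = (k+1)^(bch k (Nat.log k a)) * (a / k ^ Nat.log k a)
        + bch k (a % k ^ Nat.log k a) := bch_eq ha
    have h3 : a % k ^ Nat.log k a < a := mod_pow_log_lt ha
    have step1 := bch_L hk (a % k ^ Nat.log k a + b) (Nat.log k a) (a / k ^ Nat.log k a) hdk
    have step2 := IH _ h3 b
    have hn : a + b = k ^ Nat.log k a * (a / k ^ Nat.log k a)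
        + (a % k ^ Nat.log k a + b) := by omega
    rw [hn]
    omega

lemma bch_nsmul {k : ℕ} (hk : 2 ≤ k) (d b : ℕ) : d * bch k b ≤ bch k (d * b) := by
  induction d with
  | zero => simp [bch_zero]
  | succ n IH =>
    have h1 := bch_superadd hk (n*b) b
    calc (n+1) * bch k b = n * bch k b + bch k b := by ring
    _ ≤ bch k (n*b) + bch k b := by omega
    _ ≤ bch k (n*b + b) := h1
    _ = bch k ((n+1)*b) := by ring_nf

lemma bch_pow_mul {k : ℕ} (hk : 2 ≤ k) : ∀ m e, (k+1)^(bch k e) * bch k m ≤ bch k (k^e * m) := by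
  intro m
  induction m using Nat.strong_induction_on with
  | _ m IH =>
  intro e
  by_cases hm : m = 0
  · subst hm; simp [bch_zero]
  · obtain ⟨hmrep, hc1, hck, hs⟩ := self_decomp hk hm
    have hBm : bch k m = (k+1)^(bch k (Nat.log k m)) * (m / k ^ Nat.log k m)
        + bch k (m % k ^ Nat.log k m) := bch_eq hm
    have h3 : m % k ^ Nat.log k m < m := mod_pow_log_lt hm
    have step1 := bch_L hk (k^e * (m % k ^ Nat.log k m)) (e + Nat.log k m)
      (m / k ^ Nat.log k m) hck
    have step2 := IH _ h3 e
    have hsup : bch k e + bch k (Nat.log k m) ≤ bch k (e + Nat.log k m) :=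
      bch_superadd hk _ _
    have hpow : (k+1)^(bch k e) * (k+1)^(bch k (Nat.log k m))
        ≤ (k+1)^(bch k (e + Nat.log k m)) := by
      rw [← pow_add]
      exact Nat.pow_le_pow_right (by omega) hsup
    have hn : k^e * m = k^(e + Nat.log k m) * (m / k ^ Nat.log k m)
        + k^e * (m % k ^ Nat.log k m) := by
      rw [pow_add, mul_assoc, ← Nat.mul_add, ← hmrep]
    rw [hn]
    calc (k+1)^(bch k e) * bch k m
        = (k+1)^(bch k e) * ((k+1)^(bch k (Nat.log k m)) * (m / k ^ Nat.log k m))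
          + (k+1)^(bch k e) * bch k (m % k ^ Nat.log k m) := by rw [hBm]; ring
    _ = ((k+1)^(bch k e) * (k+1)^(bch k (Nat.log k m))) * (m / k ^ Nat.log k m)
          + (k+1)^(bch k e) * bch k (m % k ^ Nat.log k m) := by ring
    _ ≤ (k+1)^(bch k (e + Nat.log k m)) * (m / k ^ Nat.log k m)
          + bch k (k^e * (m % k ^ Nat.log k m)) :=
        Nat.add_le_add (Nat.mul_le_mul_right _ hpow) step2
    _ ≤ bch k (k^(e + Nat.log k m) * (m / k ^ Nat.log k m)
          + k^e * (m % k ^ Nat.log k m)) := step1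

lemma bch_supermul {k : ℕ} (hk : 2 ≤ k) : ∀ a b, bch k a * bch k b ≤ bch k (a * b) := by
  intro a
  induction a using Nat.strong_induction_on with
  | _ a IH =>
  intro b
  by_cases ha : a = 0
  · subst ha; simp [bch_zero]
  · obtain ⟨harep, hd1, hdk, hr⟩ := self_decomp hk ha
    have hBa : bch k a = (k+1)^(bch k (Nat.log k a)) * (a / k ^ Nat.log k a)
        + bch k (a % k ^ Nat.log k a) := bch_eq ha
    have h3 : a % k ^ Nat.log k a < a := mod_pow_log_lt ha
    have hab : a * b = k ^ Nat.log k a * ((a / k ^ Nat.log k a) * b)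
        + (a % k ^ Nat.log k a) * b := by
      rw [← mul_assoc, ← Nat.add_mul, ← harep]
    have step0 := bch_superadd hk (k ^ Nat.log k a * ((a / k ^ Nat.log k a) * b))
      ((a % k ^ Nat.log k a) * b)
    have step1 := bch_pow_mul hk ((a / k ^ Nat.log k a) * b) (Nat.log k a)
    have step2 := bch_nsmul hk (a / k ^ Nat.log k a) b
    have step3 := IH _ h3 b
    have hmul1 : (k+1)^(bch k (Nat.log k a)) * ((a / k ^ Nat.log k a) * bch k b)
        ≤ (k+1)^(bch k (Nat.log k a)) * bch k ((a / k ^ Nat.log k a) * b) :=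
      Nat.mul_le_mul_left _ step2
    rw [hab]
    calc bch k a * bch k b
        = (k+1)^(bch k (Nat.log k a)) * ((a / k ^ Nat.log k a) * bch k b)
          + bch k (a % k ^ Nat.log k a) * bch k b := by rw [hBa]; ring
    _ ≤ (k+1)^(bch k (Nat.log k a)) * bch k ((a / k ^ Nat.log k a) * b)
          + bch k ((a % k ^ Nat.log k a) * b) := Nat.add_le_add hmul1 step3
    _ ≤ bch k (k ^ Nat.log k a * ((a / k ^ Nat.log k a) * b))
          + bch k ((a % k ^ Nat.log k a) * b) := Nat.add_le_add_right step1 _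
    _ ≤ _ := step0

lemma bch_pow {k : ℕ} (hk : 2 ≤ k) (a : ℕ) : bch k (k^a) = (k+1)^(bch k a) := by
  have hka : 0 < k^a := pow_pos (by omega) _
  obtain ⟨hlog, hdiv, hmod⟩ := decomp (E := a) (d := 1) (r := 0) hk le_rfl (by omega) hka
  have hn : k^a = k^a*1 + 0 := by ring
  rw [hn, bch_eq (by omega), hlog, hdiv, hmod, bch_zero, mul_one, add_zero]

open Ordinal in
noncomputable def ordv (k n : ℕ) : Ordinal.{0} :=
  if hn : n = 0 then 0
  else ω ^ ordv k (Nat.log k n) * (n / k ^ Nat.log k n : ℕ) + ordv k (n % k ^ Nat.log k n)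
decreasing_by
  · exact Nat.log_lt_self k hn
  · exact mod_pow_log_lt hn

lemma ordv_zero (k : ℕ) : ordv k 0 = 0 := by rw [ordv]; rfl

open Ordinal in
lemma ordv_eq {k n : ℕ} (hn : n ≠ 0) :
    ordv k n = ω ^ ordv k (Nat.log k n) * (n / k ^ Nat.log k n : ℕ)
      + ordv k (n % k ^ Nat.log k n) := by
  rw [ordv]; simp [hn]

open Ordinal in
lemma ordv_key {k : ℕ} (hk : 2 ≤ k) : ∀ N : ℕ,
    (∀ a, a < N → ordv k a < ordv k N) ∧
    (∀ n, n < k^N → ordv k n < ω ^ ordv k N) := by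
  intro N
  induction N using Nat.strong_induction_on with
  | _ N IH =>
  have mono : ∀ a, a < N → ordv k a < ordv k N := by
    intro a haN
    have hN : N ≠ 0 := by omega
    obtain ⟨hNrep, hNd1, hNdk, hNr⟩ := self_decomp hk hN
    have hBN := ordv_eq (k := k) hN
    have heNN : Nat.log k N < N := Nat.log_lt_self k hN
    have boundeN : ∀ n', n' < k ^ Nat.log k N →
        ordv k n' < ω ^ ordv k (Nat.log k N) := (IH _ heNN).2
    have hfirst : ω ^ ordv k (Nat.log k N) * (N / k ^ Nat.log k N : ℕ) ≤ ordv k N := by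
      rw [hBN]; exact le_self_add
    by_cases ha : a = 0
    · rw [ha, ordv_zero, hBN]
      have h1 : (0:Ordinal) < ω ^ ordv k (Nat.log k N) * (N / k ^ Nat.log k N : ℕ) := by
        exact mul_pos (opow_pos _ omega0_pos) (Nat.cast_pos'.2 (by omega))
      exact lt_of_lt_of_le h1 le_self_add
    · have hBa := ordv_eq (k := k) ha
      have hle : Nat.log k a ≤ Nat.log k N := Nat.log_mono_right (le_of_lt haN)
      rcases lt_or_eq_of_le hle with hlt | heq
      · have ha' : a < k ^ Nat.log k N := by
          have h1 : a < k ^ (Nat.log k a + 1) := Nat.lt_pow_succ_log_self (by omega) a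
          exact lt_of_lt_of_le h1 (Nat.pow_le_pow_right (by omega) (by omega))
        calc ordv k a < ω ^ ordv k (Nat.log k N) := boundeN a ha'
        _ ≤ ω ^ ordv k (Nat.log k N) * (N / k ^ Nat.log k N : ℕ) := by
            exact Ordinal.le_mul_left _ (Nat.cast_pos'.2 (by omega))
        _ ≤ ordv k N := hfirst
      · rw [heq] at hBa
        obtain ⟨harep, had1, hadk, har⟩ := self_decomp hk ha
        rw [heq] at harep har
        have hra' : ordv k (a % k ^ Nat.log k N) < ω ^ ordv k (Nat.log k N) :=
          boundeN _ har
        have hda : a / k ^ Nat.log k N ≤ N / k ^ Nat.log k N := by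
          rw [← heq] at harep har hra' hBa ⊢
          exact Nat.div_le_div_right (le_of_lt haN)
        rcases lt_or_eq_of_le hda with hdlt | hdeq
        · calc ordv k a
              < ω ^ ordv k (Nat.log k N) * ((a / k ^ Nat.log k N : ℕ) + 1) := by
                rw [hBa, mul_add, mul_one]
                exact add_lt_add_right hra' _
          _ ≤ ω ^ ordv k (Nat.log k N) * (N / k ^ Nat.log k N : ℕ) := by
                apply mul_le_mul_right
                have h4 : ((a / k ^ Nat.log k N : ℕ) : Ordinal) + 1
                    = ((a / k ^ Nat.log k N + 1 : ℕ) : Ordinal) := by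
                  rw [Nat.cast_add, Nat.cast_one]
                rw [h4]
                exact Nat.cast_le.2 (by omega)
          _ ≤ ordv k N := hfirst
        · have hralt : a % k ^ Nat.log k N < N % k ^ Nat.log k N := by
            rw [hdeq] at harep; omega
          have hrNlt : N % k ^ Nat.log k N < N := mod_pow_log_lt hN
          have h2 := (IH _ hrNlt).1 _ hralt
          rw [hBa, hBN, hdeq]
          exact add_lt_add_right h2 _
  refine ⟨mono, ?_⟩
  intro n hn
  by_cases hn0 : n = 0
  · rw [hn0, ordv_zero]; exact opow_pos _ omega0_pos
  · obtain ⟨hrep, hd1, hdk, hr⟩ := self_decomp hk hn0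
    have he'N : Nat.log k n < N := by
      have h1 : k ^ Nat.log k n ≤ n := Nat.pow_log_le_self k hn0
      exact (Nat.pow_lt_pow_iff_right (by omega : 1 < k)).1 (lt_of_le_of_lt h1 hn)
    have hBr : ordv k (n % k ^ Nat.log k n) < ω ^ ordv k (Nat.log k n) :=
      (IH _ he'N).2 _ hr
    have hBe : ordv k (Nat.log k n) < ordv k N := mono _ he'N
    rw [ordv_eq hn0]
    calc ω ^ ordv k (Nat.log k n) * (n / k ^ Nat.log k n : ℕ)
          + ordv k (n % k ^ Nat.log k n)
        < ω ^ Order.succ (ordv k (Nat.log k n)) :=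
          by rw [opow_succ]; exact opow_mul_add_lt_opow_mul hBr (natCast_lt_omega0 _)
    _ ≤ ω ^ ordv k N :=
          opow_le_opow_right omega0_pos (Order.succ_le_of_lt hBe)

open Ordinal in
lemma ordv_lt_ordv {k : ℕ} (hk : 2 ≤ k) {a b : ℕ} (h : a < b) : ordv k a < ordv k b :=
  (ordv_key hk b).1 a h

open Ordinal in
lemma ordv_bch {k : ℕ} (hk : 2 ≤ k) : ∀ n, ordv (k+1) (bch k n) = ordv k n := by
  intro n
  induction n using Nat.strong_induction_on with
  | _ n IH =>
  by_cases hn : n = 0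
  · rw [hn, bch_zero, ordv_zero, ordv_zero]
  · obtain ⟨hrep, hd1, hdk, hr⟩ := self_decomp hk hn
    have hBn := bch_eq (k := k) hn
    have hBr : bch k (n % k ^ Nat.log k n) < (k+1)^(bch k (Nat.log k n)) :=
      bch_bound hk hr
    obtain ⟨hlog, hdiv, hmod⟩ := decomp (K := k+1) (E := bch k (Nat.log k n))
      (d := n / k ^ Nat.log k n) (r := bch k (n % k ^ Nat.log k n))
      (by omega) hd1 (by omega) hBr
    have hbn0 : bch k n ≠ 0 := by
      have := bch_pos hk hn
      omega
    rw [ordv_eq hbn0, hBn, hlog, hdiv, hmod,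
      IH _ (Nat.log_lt_self k hn), IH _ (mod_pow_log_lt hn), ordv_eq hn]

end GW

namespace GW

lemma val_le_bch {k : ℕ} (hk : 2 ≤ k) (τ : LTerm) :
    τ.val (k+1) ≤ bch k (τ.val k) := by
  induction τ with
  | zero => simp [LTerm.val, bch_zero]
  | add s t IHs IHt =>
    exact le_trans (Nat.add_le_add IHs IHt) (bch_superadd hk _ _)
  | mul s t IHs IHt =>
    exact le_trans (Nat.mul_le_mul IHs IHt) (bch_supermul hk _ _)
  | expBase s IHs =>
    show (k+1) ^ (s.val (k+1)) ≤ bch k (k ^ s.val k)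
    rw [bch_pow hk]
    exact Nat.pow_le_pow_right (by omega) IHs

end GW

/-- Every Goodstein walk over the elementary notation system is finite: if
for each `i` with `m i > 0` there is a term `τ` over base `i+2` with value
`m i` such that `m (i+1)` is the value of `τ` at base `i+3`, minus `1`, then
some `m i = 0`. -/
theorem goodstein_walk_finite (m : ℕ → ℕ)
    (hwalk : ∀ i : ℕ, 0 < m i →
      ∃ τ : LTerm, τ.val (i + 2) = m i ∧ m (i + 1) = τ.val (i + 3) - 1) :
    ∃ i : ℕ, m i = 0 := by
  by_contra hc
  push_neg at hc
  have hpos : ∀ i, 0 < m i := fun i => Nat.pos_of_ne_zero (hc i)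
  have hdec : ∀ i, GW.ordv (i+3) (m (i+1)) < GW.ordv (i+2) (m i) := by
    intro i
    obtain ⟨τ, hv, hm'⟩ := hwalk i (hpos i)
    have hk : 2 ≤ i + 2 := by omega
    have e3 : i + 2 + 1 = i + 3 := by omega
    have h1 : τ.val (i+3) ≤ GW.bch (i+2) (m i) := by
      have h := GW.val_le_bch hk τ
      rw [e3, hv] at h
      exact h
    have h2 : 0 < GW.bch (i+2) (m i) := GW.bch_pos hk (by have := hpos i; omega)
    have h3 : m (i+1) < GW.bch (i+2) (m i) := by omega
    have h4 := GW.ordv_lt_ordv (k := i+3) (by omega) h3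
    have h5 := GW.ordv_bch hk (m i)
    rw [e3] at h5
    rwa [h5] at h4
  obtain ⟨o, ⟨i₀, hi₀⟩, hmin⟩ :=
    Ordinal.lt_wf.has_min (Set.range fun i => GW.ordv (i+2) (m i))
      ⟨GW.ordv (0+2) (m 0), ⟨0, rfl⟩⟩
  refine hmin (GW.ordv (i₀+1+2) (m (i₀+1))) ⟨i₀+1, rfl⟩ ?_
  have e3 : i₀ + 1 + 2 = i₀ + 3 := by omega
  rw [e3, ← hi₀]
  exact hdec i₀
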